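/- arXiv:1611.05944 — 2 statements merged into one kernel-verified Lean document; each statement's English description precedes it below -/
import Mathlib

section
/- For any linear map L on ℚ^d (or any finite-dimensional vector space) and subspaces V, W, one has rank(L(V)) ≥ rank(L(V ∩ W)) + rank(L(V + W)) − rank(L(W)). -/
theorem stmt_0 {K : Type*} [Field K] {E F : Type*} [AddCommGroup E] [Module K E]
    [AddCommGroup F] [Module K F] [FiniteDimensional K E]
    (L : E →ₗ[K] F) (V W : Submodule K E) :
    (Module.finrank K (V.map L) : ℤ) ≥
      (Module.finrank K ((V ⊓ W).map L) : ℤ) +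
      (Module.finrank K ((V ⊔ W).map L) : ℤ) -
      (Module.finrank K (W.map L) : ℤ) := by
  haveI : FiniteDimensional K (V.map L) := Module.Finite.map _ _
  haveI : FiniteDimensional K (W.map L) := Module.Finite.map _ _
  haveI : FiniteDimensional K ((V ⊓ W).map L) := Module.Finite.map _ _
  haveI : FiniteDimensional K ((V ⊔ W).map L) := Module.Finite.map _ _
  have hsup : (V ⊔ W).map L = V.map L ⊔ W.map L := Submodule.map_sup _ _ _
  have hinf : (V ⊓ W).map L ≤ V.map L ⊓ W.map L := Submodule.map_inf_le _
  have h1 : Module.finrank K ((V ⊓ W).map L) ≤ Module.finrank K (V.map L ⊓ W.map L : Submodule K F) :=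
    Submodule.finrank_mono hinf
  have h2 : Module.finrank K (V.map L ⊔ W.map L : Submodule K F) +
      Module.finrank K (V.map L ⊓ W.map L : Submodule K F) =
      Module.finrank K (V.map L) + Module.finrank K (W.map L) :=
    Submodule.finrank_sup_add_finrank_inf_eq _ _
  rw [hsup]
  omega
end

section
/- Let k ≥ 2 and let φ₁,…,φ_k : ℚ^d → ℚ^{d−1} be linear maps each of rank d−1 whose kernels are lines ℓ₁,…,ℓ_k that are linearly independent (their sum has dimension k). Then for every subspace T of ℚ^d of dimension l, Σᵢ (1/(k−1))·dim(φᵢ(T)) ≥ l. -/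
open Module Submodule

lemma finrank_sup_le' {K V : Type*} [Field K] [AddCommGroup V] [Module K V]
    [FiniteDimensional K V] (s t : Submodule K V) :
    finrank K ↥(s ⊔ t) ≤ finrank K s + finrank K t := by
  have := Submodule.finrank_sup_add_finrank_inf_eq s t
  omega

lemma finrank_biSup_le {K V ι : Type*} [Field K] [AddCommGroup V] [Module K V]
    [FiniteDimensional K V] (s : Finset ι) (f : ι → Submodule K V) :
    finrank K ↥(⨆ i ∈ s, f i) ≤ ∑ i ∈ s, finrank K (f i) := by
  classical
  induction s using Finset.induction_on with
  | empty => simp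
  | insert _ _ ha ih =>
    rw [Finset.sum_insert ha, Finset.iSup_insert]
    exact (finrank_sup_le' _ _).trans (by omega)

theorem stmt_14 (d k : ℕ) (hk : 2 ≤ k)
    (φ : Fin k → ((Fin d → ℚ) →ₗ[ℚ] (Fin (d - 1) → ℚ)))
    (hrank : ∀ i, Module.finrank ℚ (LinearMap.range (φ i)) = d - 1)
    (hker : ∀ i, Module.finrank ℚ (LinearMap.ker (φ i)) = 1)
    (hindep : Module.finrank ℚ (⨆ i, LinearMap.ker (φ i) : Submodule ℚ (Fin d → ℚ)) = k)
    (T : Submodule ℚ (Fin d → ℚ)) (l : ℕ) (hT : Module.finrank ℚ T = l) :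
    (l : ℚ) ≤ ∑ i, (1 / ((k : ℚ) - 1)) * (Module.finrank ℚ (T.map (φ i)) : ℚ) := by
  classical
  -- rank-nullity on restrictions
  have key : ∀ i, finrank ℚ (T.map (φ i)) + finrank ℚ ↥(T ⊓ LinearMap.ker (φ i)) = l := by
    intro i
    have h1 := LinearMap.finrank_range_add_finrank_ker ((φ i).domRestrict T)
    rw [LinearMap.range_domRestrict, LinearMap.ker_domRestrict] at h1
    have h2 : finrank ℚ ↥(Submodule.comap T.subtype (LinearMap.ker (φ i)))
        = finrank ℚ ↥(T ⊓ LinearMap.ker (φ i)) := by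
      rw [← Submodule.finrank_map_subtype_eq T, Submodule.map_comap_subtype]
    rw [h2, hT] at h1
    exact h1
  -- ε i
  have heps : ∀ i, finrank ℚ ↥(T ⊓ LinearMap.ker (φ i))
      = if LinearMap.ker (φ i) ≤ T then 1 else 0 := by
    intro i
    by_cases h : LinearMap.ker (φ i) ≤ T
    · rw [if_pos h, inf_eq_right.mpr h, hker]
    · rw [if_neg h]
      have hlt : T ⊓ LinearMap.ker (φ i) < LinearMap.ker (φ i) := by
        refine lt_of_le_of_ne inf_le_right fun he => h ?_
        rw [← he]; exact inf_le_left
      have := Submodule.finrank_lt_finrank_of_lt hlt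
      rw [hker] at this; omega
  set S : Finset (Fin k) := Finset.univ.filter (fun i => LinearMap.ker (φ i) ≤ T) with hS
  -- |S| ≤ l
  have hScard : S.card ≤ l := by
    have hle : (⨆ i ∈ S, LinearMap.ker (φ i)) ≤ T := by
      refine iSup₂_le fun i hi => ?_
      simpa [hS] using (Finset.mem_filter.mp hi).2
    have h1 : finrank ℚ ↥(⨆ i ∈ S, LinearMap.ker (φ i)) ≤ l := by
      rw [← hT]; exact Submodule.finrank_mono hle
    have hsplit : (⨆ i, LinearMap.ker (φ i) : Submodule ℚ (Fin d → ℚ))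
        = (⨆ i ∈ S, LinearMap.ker (φ i)) ⊔ (⨆ i ∈ Sᶜ, LinearMap.ker (φ i)) := by
      rw [← Finset.iSup_union, Finset.union_compl, ← Finset.iSup_coe, Finset.coe_univ, iSup_univ]
    have h2 : k ≤ finrank ℚ ↥(⨆ i ∈ S, LinearMap.ker (φ i))
        + finrank ℚ ↥(⨆ i ∈ Sᶜ, LinearMap.ker (φ i)) := by
      calc k = finrank ℚ ↥((⨆ i ∈ S, LinearMap.ker (φ i)) ⊔ ⨆ i ∈ Sᶜ, LinearMap.ker (φ i)) := by
              rw [← hsplit, hindep]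
        _ ≤ _ := finrank_sup_le' _ _
    have h3 : finrank ℚ ↥(⨆ i ∈ Sᶜ, LinearMap.ker (φ i)) ≤ Sᶜ.card := by
      calc _ ≤ ∑ i ∈ Sᶜ, finrank ℚ (LinearMap.ker (φ i)) := finrank_biSup_le _ _
        _ = Sᶜ.card := by simp [hker]
    have h4 : S.card + Sᶜ.card = k := by
      rw [Finset.card_add_card_compl]; simp
    omega
  -- sum identity
  have hsum : ∑ i, finrank ℚ (T.map (φ i)) + S.card = k * l := by
    have : ∑ i, (finrank ℚ (T.map (φ i)) + finrank ℚ ↥(T ⊓ LinearMap.ker (φ i))) = k * l := by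
      simp [key, Finset.sum_const]
    rw [Finset.sum_add_distrib] at this
    have h2 : ∑ i, finrank ℚ ↥(T ⊓ LinearMap.ker (φ i)) = S.card := by
      simp only [heps]
      rw [hS, Finset.card_filter]
    omega
  have hN : (k - 1) * l ≤ ∑ i, finrank ℚ (T.map (φ i)) := by
    rw [Nat.sub_mul, one_mul]; omega
  -- rational conclusion
  rw [← Finset.mul_sum]
  have hk1 : (0 : ℚ) < (k : ℚ) - 1 := by
    have : (2 : ℚ) ≤ k := by exact_mod_cast hk
    linarith
  rw [div_mul_eq_mul_div, one_mul, le_div_iff₀ hk1]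
  have : ((k - 1) * l : ℕ) ≤ (∑ i, finrank ℚ (T.map (φ i)) : ℕ) := hN
  have hcast : (((k : ℚ) - 1) * l) = (((k - 1) * l : ℕ) : ℚ) := by
    push_cast [Nat.cast_sub (by omega : 1 ≤ k)]; ring
  rw [mul_comm (l : ℚ)]
  calc ((k : ℚ) - 1) * l = (((k-1)*l : ℕ) : ℚ) := hcast
    _ ≤ _ := by exact_mod_cast this
end
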